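/- Under the construction setup with 1 ≤ r ≤ 𝔫, a function u : Z_f ⊕ Z_g → F is the evaluation on Z_f ⊕ Z_g of some polynomial in span_F(B_{r²}) if and only if there exists a bivariate polynomial s ∈ F[x,y] with deg_x(s) < r and deg_y(s) < r such that u(β + γ) = s(β, γ) for all β ∈ Z_f and γ ∈ Z_g; that is, the evaluation code of span_F(B_{r²}) on Z_f ⊕ Z_g coincides, up to the relabeling of coordinates (β, γ) ↦ β + γ, with the tensor product code RS(r, Z_f) ⊗ RS(r, Z_g). -/

import Mathlib

open Polynomial
open scoped Classical

/-- The point set `Z_f ⊕ Z_g = {β + γ : β ∈ Z_f, γ ∈ Z_g}`. -/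
noncomputable def rootSumSet {F : Type*} [Field F] (f g : F[X]) : Finset F :=
  (f.roots.toFinset ×ˢ g.roots.toFinset).image fun p => p.1 + p.2

/-- The set `B_{r²} = {g^i f^j : 0 ≤ i, j ≤ r-1}` of polynomials. -/
def Bset {F : Type*} [Field F] (f g : F[X]) (r : ℕ) : Set F[X] :=
  {w | ∃ i j : ℕ, i < r ∧ j < r ∧ w = g ^ i * f ^ j}

/-- The linear evaluation map `F[X] → (S → F)` on a finite set `S` of points. -/
noncomputable def evalOn {F : Type*} [Field F] (S : Finset F) : F[X] →ₗ[F] (↥S → F) :=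
  LinearMap.pi fun α => Polynomial.leval (α : F)

/-- Under the construction setup with `1 ≤ r ≤ 𝔫`, a function
`u : Z_f ⊕ Z_g → F` lies in the evaluation code of `span_F(B_{r²})` on `Z_f ⊕ Z_g` if and
only if there is a bivariate polynomial `s ∈ F[x,y]` with `deg_x s < r` and `deg_y s < r`
such that `u(β + γ) = s(β, γ)` for all `β ∈ Z_f`, `γ ∈ Z_g`; i.e. the evaluation code
coincides, up to the relabeling `(β, γ) ↦ β + γ`, with the product code
`RS(r, Z_f) ⊗ RS(r, Z_g)`. -/
theorem stmt_3 (p e : ℕ) (hp : p.Prime) (he : 0 < e)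
    (F : Type*) [Field F] [Fintype F] [CharP F p]
    (f : F[X])
    (hflin : ∀ m ∈ f.support, ∃ i : ℕ, m = (p ^ e) ^ i)
    (hdeg : 1 < f.natDegree)
    (ha0 : f.coeff 1 ≠ 0) (ha1 : f.coeff 1 ≠ 1)
    (g : F[X]) (hg : g = X - f)
    (hfs : f.Splits) (hgs : g.Splits)
    (r : ℕ) (hr : 1 ≤ r) (hrn : r ≤ f.natDegree)
    (u : ↥(rootSumSet f g) → F) :
    u ∈ Submodule.map (evalOn (rootSumSet f g)) (Submodule.span F (Bset f g r)) ↔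
      ∃ s : MvPolynomial (Fin 2) F,
        MvPolynomial.degreeOf 0 s < r ∧ MvPolynomial.degreeOf 1 s < r ∧
        ∀ β ∈ f.roots.toFinset, ∀ γ ∈ g.roots.toFinset,
          ∀ hβγ : β + γ ∈ rootSumSet f g,
            u ⟨β + γ, hβγ⟩ = MvPolynomial.eval ![β, γ] s := by

  haveI := Fact.mk hp
  -- f is nonzero
  have hf0 : f ≠ 0 := fun h => by simp [h] at hdeg
  have hg0 : g ≠ 0 := by
    intro h
    have : f = X := by rw [hg] at h; linear_combination (norm := ring_nf) -h
    rw [this, natDegree_X] at hdeg; exact lt_irrefl 1 hdeg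
  -- additivity of f and g
  have hfadd : ∀ x y : F, f.eval (x + y) = f.eval x + f.eval y := by
    intro x y
    rw [eval_eq_sum, eval_eq_sum, eval_eq_sum, Polynomial.sum_def, Polynomial.sum_def,
      Polynomial.sum_def, ← Finset.sum_add_distrib]
    refine Finset.sum_congr rfl fun m hm => ?_
    obtain ⟨i, rfl⟩ := hflin m hm
    rw [← pow_mul, add_pow_char_pow, mul_add]
  have hgadd : ∀ x y : F, g.eval (x + y) = g.eval x + g.eval y := by
    intro x y
    rw [hg]; simp only [eval_sub, eval_X, hfadd]; ring
  -- evaluation facts on roots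
  have hfroot : ∀ β ∈ f.roots.toFinset, f.eval β = 0 := fun β hβ =>
    ((mem_roots hf0).mp (Multiset.mem_toFinset.mp hβ))
  have hgroot : ∀ γ ∈ g.roots.toFinset, g.eval γ = 0 := fun γ hγ =>
    ((mem_roots hg0).mp (Multiset.mem_toFinset.mp hγ))
  have hgβ : ∀ β ∈ f.roots.toFinset, g.eval β = β := by
    intro β hβ; rw [hg]; simp [hfroot β hβ]
  have hfγ : ∀ γ ∈ g.roots.toFinset, f.eval γ = γ := by
    intro γ hγ
    have := hgroot γ hγ
    rw [hg, eval_sub, eval_X, sub_eq_zero] at this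
    exact this.symm
  -- key evaluation of generators
  have hkey : ∀ (i j : ℕ), ∀ β ∈ f.roots.toFinset, ∀ γ ∈ g.roots.toFinset,
      (g ^ i * f ^ j).eval (β + γ) = β ^ i * γ ^ j := by
    intro i j β hβ γ hγ
    rw [eval_mul, eval_pow, eval_pow, hgadd, hfadd, hgβ β hβ, hfγ γ hγ,
      hgroot γ hγ, hfroot β hβ, add_zero, zero_add]
  have hr0 : 0 < r := hr
  constructor
  · rintro ⟨w, hw, rfl⟩
    have key : ∃ s : MvPolynomial (Fin 2) F,
        MvPolynomial.degreeOf 0 s < r ∧ MvPolynomial.degreeOf 1 s < r ∧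
        ∀ β ∈ f.roots.toFinset, ∀ γ ∈ g.roots.toFinset,
          w.eval (β + γ) = MvPolynomial.eval ![β, γ] s := by
      induction hw using Submodule.span_induction with
      | mem w hwmem =>
        obtain ⟨i, j, hi, hj, rfl⟩ := hwmem
        refine ⟨(MvPolynomial.X 0) ^ i * (MvPolynomial.X 1) ^ j, ?_, ?_, ?_⟩
        · rw [MvPolynomial.degreeOf_lt_iff hr0]
          intro m hm
          rw [MvPolynomial.X_pow_eq_monomial, MvPolynomial.X_pow_eq_monomial,
            MvPolynomial.monomial_mul, MvPolynomial.support_monomial] at hm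
          simp only [one_mul, if_neg (one_ne_zero (α := F)), Finset.mem_singleton] at hm
          subst hm
          simpa using hi
        · rw [MvPolynomial.degreeOf_lt_iff hr0]
          intro m hm
          rw [MvPolynomial.X_pow_eq_monomial, MvPolynomial.X_pow_eq_monomial,
            MvPolynomial.monomial_mul, MvPolynomial.support_monomial] at hm
          simp only [one_mul, if_neg (one_ne_zero (α := F)), Finset.mem_singleton] at hm
          subst hm
          simpa using hj
        · intro β hβ γ hγ
          rw [hkey i j β hβ γ hγ]
          simp
      | zero =>
        exact ⟨0, by simpa using hr0, by simpa using hr0, by simp⟩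
      | add w₁ w₂ h₁ h₂ ih₁ ih₂ =>
        obtain ⟨s₁, hs₁0, hs₁1, hs₁⟩ := ih₁
        obtain ⟨s₂, hs₂0, hs₂1, hs₂⟩ := ih₂
        refine ⟨s₁ + s₂, ?_, ?_, ?_⟩
        · exact lt_of_le_of_lt (MvPolynomial.degreeOf_add_le _ _ _) (max_lt hs₁0 hs₂0)
        · exact lt_of_le_of_lt (MvPolynomial.degreeOf_add_le _ _ _) (max_lt hs₁1 hs₂1)
        · intro β hβ γ hγ
          rw [eval_add, map_add, hs₁ β hβ γ hγ, hs₂ β hβ γ hγ]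
      | smul c w hwmem ih =>
        obtain ⟨s, hs0, hs1, hs⟩ := ih
        refine ⟨c • s, ?_, ?_, ?_⟩
        · refine lt_of_le_of_lt ?_ hs0
          rw [MvPolynomial.smul_eq_C_mul]
          exact le_trans (MvPolynomial.degreeOf_mul_le _ _ _)
            (by rw [MvPolynomial.degreeOf_C, zero_add])
        · refine lt_of_le_of_lt ?_ hs1
          rw [MvPolynomial.smul_eq_C_mul]
          exact le_trans (MvPolynomial.degreeOf_mul_le _ _ _)
            (by rw [MvPolynomial.degreeOf_C, zero_add])
        · intro β hβ γ hγ
          rw [Polynomial.smul_eq_C_mul, eval_mul, eval_C, MvPolynomial.smul_eq_C_mul,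
            map_mul, MvPolynomial.eval_C, hs β hβ γ hγ]
    obtain ⟨s, hs0, hs1, hs⟩ := key
    refine ⟨s, hs0, hs1, fun β hβ γ hγ hβγ => ?_⟩
    show (evalOn (rootSumSet f g)) w ⟨β + γ, hβγ⟩ = _
    simpa [evalOn] using hs β hβ γ hγ
  · rintro ⟨s, hs0, hs1, hs⟩
    refine ⟨∑ d ∈ s.support, MvPolynomial.coeff d s • (g ^ (d 0) * f ^ (d 1)), ?_, ?_⟩
    · refine Submodule.sum_mem _ fun d hd => Submodule.smul_mem _ _ (Submodule.subset_span ?_)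
      exact ⟨d 0, d 1, (MvPolynomial.degreeOf_lt_iff hr0).mp hs0 d hd,
        (MvPolynomial.degreeOf_lt_iff hr0).mp hs1 d hd, rfl⟩
    · funext a
      obtain ⟨α, hα⟩ := a
      obtain ⟨⟨β, γ⟩, hmem, hsum⟩ := Finset.mem_image.mp hα
      obtain ⟨hβ, hγ⟩ := Finset.mem_product.mp hmem
      subst hsum
      have : (∑ d ∈ s.support, MvPolynomial.coeff d s • (g ^ (d 0) * f ^ (d 1))).eval (β + γ)
          = MvPolynomial.eval ![β, γ] s := by
        rw [eval_finset_sum, MvPolynomial.eval_eq']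
        refine Finset.sum_congr rfl fun d _ => ?_
        rw [Polynomial.smul_eq_C_mul, eval_mul, eval_C, hkey (d 0) (d 1) β hβ γ hγ,
          Fin.prod_univ_two]
        simp
      simp only [evalOn, LinearMap.pi_apply, leval_apply] at *
      rw [this, hs β hβ γ hγ hα]
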